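/- The homeomorphism f : 𝔻 → 𝔻 defined by f(z) = z · exp(i · ln(1 − |z|)) (and f(0) = 0) has no continuous extension to any point of the boundary ∂𝔻: for every p with |p| = 1, the limit of f(z) as z → p (with z ∈ 𝔻) does not exist. -/

import Mathlib

open Complex Filter

/-- Key helper: for any real sequence `t n ≤ 0` tending to `-∞`, the points
`z n = (1 - exp (t n)) p` lie in the disc, tend to `p`, and
`f (z n) = (1 - exp (t n)) p · exp(I t n)`. -/
lemma key_lemma (f : ℂ → ℂ)
    (hf : ∀ z : ℂ, f z = z * Complex.exp (Complex.I * (Real.log (1 - ‖z‖) : ℂ)))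
    (p : ℂ) (hp : ‖p‖ = 1) (w : ℂ)
    (hw : Filter.Tendsto f (nhdsWithin p {z : ℂ | ‖z‖ < 1}) (nhds w))
    (t : ℕ → ℝ) (ht0 : ∀ n, t n ≤ 0) (ht : Tendsto t atTop atBot) :
    Tendsto (fun n => ((1 - Real.exp (t n) : ℝ) : ℂ) * p * Complex.exp (Complex.I * (t n : ℂ)))
      atTop (nhds w) := by
  set z : ℕ → ℂ := fun n => ((1 - Real.exp (t n) : ℝ) : ℂ) * p with hz
  have habs : ∀ n, ‖z n‖ = 1 - Real.exp (t n) := by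
    intro n
    have h1 : Real.exp (t n) ≤ 1 := Real.exp_le_one_iff.mpr (ht0 n)
    show ‖((1 - Real.exp (t n) : ℝ) : ℂ) * p‖ = 1 - Real.exp (t n)
    rw [norm_mul, Complex.norm_real, Real.norm_eq_abs, hp, mul_one,
      _root_.abs_of_nonneg (by linarith : (0:ℝ) ≤ 1 - Real.exp (t n))]
  have hmem : ∀ n, z n ∈ {z : ℂ | ‖z‖ < 1} := by
    intro n
    have := Real.exp_pos (t n)
    simp only [Set.mem_setOf_eq, habs n]
    linarith
  have hexp : Tendsto (fun n => Real.exp (t n)) atTop (nhds 0) :=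
    Real.tendsto_exp_atBot.comp ht
  have hr : Tendsto (fun n => (1 - Real.exp (t n) : ℝ)) atTop (nhds 1) := by
    have := hexp.const_sub 1
    simpa using this
  have hcoef : Tendsto (fun n => ((1 - Real.exp (t n) : ℝ) : ℂ)) atTop (nhds 1) := by
    have h2 := (Complex.continuous_ofReal.tendsto (1:ℝ)).comp hr
    rw [Complex.ofReal_one] at h2
    exact h2
  have hztend : Tendsto z atTop (nhdsWithin p {z : ℂ | ‖z‖ < 1}) := by
    apply tendsto_nhdsWithin_of_tendsto_nhds_of_eventually_within
    · have h3 := hcoef.mul (tendsto_const_nhds (x := p))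
      rw [one_mul] at h3
      exact h3
    · exact Filter.Eventually.of_forall hmem
  have hfz : ∀ n, f (z n) =
      ((1 - Real.exp (t n) : ℝ) : ℂ) * p * Complex.exp (Complex.I * (t n : ℂ)) := by
    intro n
    rw [hf, habs n]
    have : (1 : ℝ) - (1 - Real.exp (t n)) = Real.exp (t n) := by ring
    rw [this, Real.log_exp]
  exact (hw.comp hztend).congr hfz

/-- The homeomorphism `f(z) = z · exp(i ln(1 − |z|))` of the unit disc has no continuous
extension at any boundary point: for every `p` with `|p| = 1`, `f(z)` has no limit as
`z → p` within the disc. -/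
theorem stmt6 (f : ℂ → ℂ)
    (hf : ∀ z : ℂ, f z = z * Complex.exp (Complex.I * (Real.log (1 - ‖z‖) : ℂ)))
    (p : ℂ) (hp : ‖p‖ = 1) :
    ¬ ∃ w : ℂ, Filter.Tendsto f (nhdsWithin p {z : ℂ | ‖z‖ < 1}) (nhds w) := by
  rintro ⟨w, hw⟩
  have pi_pos := Real.pi_pos
  have hnat : Tendsto (fun n : ℕ => ((n : ℝ) + 1)) atTop atTop :=
    tendsto_atTop_add_const_right _ _ tendsto_natCast_atTop_atTop
  have hmul : Tendsto (fun n : ℕ => 2 * Real.pi * ((n : ℝ) + 1)) atTop atTop :=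
    hnat.const_mul_atTop (by linarith : (0:ℝ) < 2 * Real.pi)
  have hbot1 : Tendsto (fun n : ℕ => -(2 * Real.pi) * ((n : ℝ) + 1)) atTop atBot := by
    have := tendsto_neg_atTop_atBot.comp hmul
    refine this.congr fun n => ?_
    simp [Function.comp]
  have hbot2 : Tendsto (fun n : ℕ => Real.pi - 2 * Real.pi * ((n : ℝ) + 1)) atTop atBot := by
    have h := tendsto_atBot_add_const_left atTop Real.pi (tendsto_neg_atTop_atBot.comp hmul)
    refine h.congr fun n => ?_
    simp [Function.comp, sub_eq_add_neg]
  -- first sequence: t n = -2π(n+1), exp(I t) = 1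
  have h1 : Tendsto (fun n : ℕ =>
      ((1 - Real.exp (-(2 * Real.pi) * (n + 1)) : ℝ) : ℂ) * p) atTop (nhds w) := by
    have key := key_lemma f hf p hp w hw (fun n => -(2 * Real.pi) * (n + 1))
      (fun n => by
        show -(2 * Real.pi) * ((n:ℝ) + 1) ≤ 0
        have h0 : (0:ℝ) ≤ 2 * Real.pi * ((n:ℝ) + 1) := by positivity
        linarith)
      hbot1
    refine key.congr fun n => ?_
    have heq : Complex.exp (Complex.I * ((-(2 * Real.pi) * ((n:ℝ) + 1) : ℝ) : ℂ)) = 1 := by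
      have h := Complex.exp_int_mul_two_pi_mul_I (-((n:ℤ) + 1))
      rw [← h]
      congr 1
      push_cast
      ring
    rw [heq, mul_one]
  -- second sequence: t n = π - 2π(n+1), exp(I t) = -1
  have h2 : Tendsto (fun n : ℕ =>
      -(((1 - Real.exp (Real.pi - 2 * Real.pi * (n + 1)) : ℝ) : ℂ) * p)) atTop (nhds w) := by
    have key := key_lemma f hf p hp w hw (fun n => Real.pi - 2 * Real.pi * (n + 1))
      (fun n => by
        show Real.pi - 2 * Real.pi * ((n:ℝ) + 1) ≤ 0
        have h0 : (0:ℝ) ≤ 2 * Real.pi * (n:ℝ) := by positivity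
        nlinarith)
      hbot2
    refine key.congr fun n => ?_
    have heq : Complex.exp (Complex.I * ((Real.pi - 2 * Real.pi * ((n:ℝ) + 1) : ℝ) : ℂ)) = -1 := by
      have h2pi := Complex.exp_int_mul_two_pi_mul_I (-((n:ℤ) + 1))
      have hpi := Complex.exp_pi_mul_I
      calc Complex.exp (Complex.I * ((Real.pi - 2 * Real.pi * ((n:ℝ) + 1) : ℝ) : ℂ))
          = Complex.exp ((Real.pi : ℂ) * Complex.I) *
            Complex.exp (((-((n:ℤ) + 1) : ℤ) : ℂ) * (2 * (Real.pi : ℂ) * Complex.I)) := by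
            rw [← Complex.exp_add]; congr 1; push_cast; ring
        _ = -1 := by rw [hpi, h2pi, mul_one]
    rw [heq]; ring
  -- limit values of the coefficient sequences
  have limcoef : ∀ t : ℕ → ℝ, Tendsto t atTop atBot →
      Tendsto (fun n => ((1 - Real.exp (t n) : ℝ) : ℂ) * p) atTop (nhds p) := by
    intro t ht
    have hexp : Tendsto (fun n => Real.exp (t n)) atTop (nhds 0) :=
      Real.tendsto_exp_atBot.comp ht
    have hr : Tendsto (fun n => (1 - Real.exp (t n) : ℝ)) atTop (nhds 1) := by
      have := hexp.const_sub 1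
      simpa using this
    have hc : Tendsto (fun n => ((1 - Real.exp (t n) : ℝ) : ℂ)) atTop (nhds 1) := by
      have h2 := (Complex.continuous_ofReal.tendsto (1:ℝ)).comp hr
      rw [Complex.ofReal_one] at h2
      exact h2
    have h3 := hc.mul (tendsto_const_nhds (x := p))
    rw [one_mul] at h3
    exact h3
  have hc1 := limcoef _ hbot1
  have hc2 := (limcoef _ hbot2).neg
  have e1 : w = p := tendsto_nhds_unique h1 hc1
  have e2 : w = -p := tendsto_nhds_unique h2 hc2
  have hp0 : p = 0 := by
    have : p = -p := e1 ▸ e2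
    linear_combination this / 2
  simp [hp0] at hp
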